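/- Let H be a real Hilbert space, and let x, y ∈ B_H with ‖x‖ ≥ ‖y‖, y ≠ 0, and ⟨x,y⟩ ≥ ‖y‖² + ‖y‖(‖x‖²-‖y‖²)/2. Then with ỹ = y/‖y‖ one has ‖y - ỹ‖ ≥ ‖x - ỹ‖, and consequently d_∞((x,y),Π(H)) = 1 - ‖y‖, where Π(H) = {(z,z) : z ∈ S_H}. -/

import Mathlib

theorem dist_to_Pi_first_case (H : Type*) [NormedAddCommGroup H] [InnerProductSpace ℝ H]
    [CompleteSpace H] (x y : H) (hx : ‖x‖ ≤ 1) (hy : ‖y‖ ≤ 1) (hxy : ‖y‖ ≤ ‖x‖)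
    (hy0 : y ≠ 0)
    (hinner : inner ℝ x y ≥ ‖y‖^2 + ‖y‖ * (‖x‖^2 - ‖y‖^2) / 2) :
    ‖y - ‖y‖⁻¹ • y‖ ≥ ‖x - ‖y‖⁻¹ • y‖ ∧
    sInf {r : ℝ | ∃ z : H, ‖z‖ = 1 ∧ r = max ‖x - z‖ ‖y - z‖} = 1 - ‖y‖ := by
  have hy' : (0:ℝ) < ‖y‖ := norm_pos_iff.mpr hy0
  have hyne : ‖y‖ ≠ 0 := ne_of_gt hy'
  have hty : ‖(‖y‖⁻¹ • y)‖ = 1 := by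
    rw [norm_smul, Real.norm_eq_abs, abs_of_pos (inv_pos.mpr hy'), inv_mul_cancel₀ hyne]
  have h1 : ‖y - ‖y‖⁻¹ • y‖ = 1 - ‖y‖ := by
    have e : y - ‖y‖⁻¹ • y = (1 - ‖y‖⁻¹) • y := by
      rw [sub_smul, one_smul]
    rw [e, norm_smul, Real.norm_eq_abs, abs_of_nonpos]
    · field_simp; ring
    · have : (1:ℝ) ≤ ‖y‖⁻¹ := one_le_inv_iff₀.mpr ⟨hy', hy⟩
      linarith
  have hip : (inner ℝ x (‖y‖⁻¹ • y) : ℝ) = ‖y‖⁻¹ * inner ℝ x y := real_inner_smul_right x y _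
  have hsq : ‖x - ‖y‖⁻¹ • y‖ ^ 2 ≤ (1 - ‖y‖) ^ 2 := by
    have h2 : ‖x - ‖y‖⁻¹ • y‖ ^ 2 = ‖x‖ ^ 2 - 2 * inner ℝ x (‖y‖⁻¹ • y) + ‖(‖y‖⁻¹ • y)‖ ^ 2 := by
      rw [← real_inner_self_eq_norm_sq, ← real_inner_self_eq_norm_sq, ← real_inner_self_eq_norm_sq]
      rw [inner_sub_sub_self, real_inner_comm (‖y‖⁻¹ • y) x]
      ring
    rw [h2, hip, hty]
    have key : ‖y‖⁻¹ * inner ℝ x y ≥ ‖y‖ + (‖x‖^2 - ‖y‖^2) / 2 := by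
      rw [ge_iff_le, le_inv_mul_iff₀ hy']
      calc ‖y‖ * (‖y‖ + (‖x‖^2 - ‖y‖^2) / 2) = ‖y‖^2 + ‖y‖ * (‖x‖^2 - ‖y‖^2) / 2 := by ring
        _ ≤ inner ℝ x y := hinner
    nlinarith
  have hfirst : ‖y - ‖y‖⁻¹ • y‖ ≥ ‖x - ‖y‖⁻¹ • y‖ := by
    rw [h1]
    nlinarith [norm_nonneg (x - ‖y‖⁻¹ • y), norm_nonneg (y - ‖y‖⁻¹ • y), hy]
  refine ⟨hfirst, ?_⟩
  have hmem : (1 - ‖y‖) ∈ {r : ℝ | ∃ z : H, ‖z‖ = 1 ∧ r = max ‖x - z‖ ‖y - z‖} := by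
    exact ⟨‖y‖⁻¹ • y, hty, by rw [max_eq_right (h1 ▸ hfirst), h1]⟩
  apply le_antisymm
  · apply csInf_le
    · refine ⟨1 - ‖y‖, ?_⟩
      rintro r ⟨z, hz, rfl⟩
      have : 1 - ‖y‖ ≤ ‖y - z‖ := by
        have := norm_sub_norm_le z y
        rw [hz, ← norm_sub_rev] at this
        linarith
      exact le_trans this (le_max_right _ _)
    · exact hmem
  · apply le_csInf ⟨_, hmem⟩
    rintro r ⟨z, hz, rfl⟩
    have : 1 - ‖y‖ ≤ ‖y - z‖ := by
      have := norm_sub_norm_le z y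
      rw [hz, ← norm_sub_rev] at this
      linarith
    exact le_trans this (le_max_right _ _)
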